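/- Let R be a commutative ring and d : R → R a derivation, and let I be a type. Suppose g : I → I → GL(n, R) satisfies the cocycle condition g(i,j)·g(j,k) = g(i,k) and g(i,i) = 1 for all i, j, k ∈ I. Define c(i,j) := trace( g(i,j)⁻¹ · D(g(i,j)) ), where D applies d entrywise. Then for all i, j, k ∈ I: c(j,k) − c(i,k) + c(i,j) = 0; that is, the family c is a Čech 1-cocycle. -/
import Mathlib

lemma map_d_mul {R : Type*} [CommRing R] {n : ℕ} (d : R → R)
    (hd_add : ∀ a b : R, d (a + b) = d a + d b)
    (hd_mul : ∀ a b : R, d (a * b) = d a * b + a * d b)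
    (A B : Matrix (Fin n) (Fin n) R) :
    (A * B).map d = A.map d * B + A * B.map d := by
  have hsum : ∀ (s : Finset (Fin n)) (f : Fin n → R),
      d (∑ t ∈ s, f t) = ∑ t ∈ s, d (f t) :=
    fun s f => map_sum (AddMonoidHom.mk' d hd_add) f s
  ext r s
  simp only [Matrix.map_apply, Matrix.mul_apply, Matrix.add_apply]
  rw [hsum, ← Finset.sum_add_distrib]
  refine Finset.sum_congr rfl fun t _ => ?_
  simp [hd_mul]

/-- The trace of the Atiyah class is a Čech 1-cocycle: for transition matrices
`g : I → I → GL(n,R)` satisfying the cocycle condition, the cochains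
`c(i,j) = tr(g(i,j)⁻¹ · D(g(i,j)))` (with `D` the entrywise derivation) satisfy
`c(j,k) − c(i,k) + c(i,j) = 0`. -/
theorem atiyah_class_one_cocycle {R : Type*} [CommRing R] {n : ℕ} (d : R → R)
    (hd_add : ∀ a b : R, d (a + b) = d a + d b)
    (hd_mul : ∀ a b : R, d (a * b) = d a * b + a * d b)
    {I : Type*} (g : I → I → (Matrix (Fin n) (Fin n) R)ˣ)
    (hcoc : ∀ i j k : I, g i j * g j k = g i k)
    (hone : ∀ i : I, g i i = 1)
    (i j k : I) :
    Matrix.trace ((Units.val (g j k)⁻¹) * ((Units.val (g j k)).map d))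
      - Matrix.trace ((Units.val (g i k)⁻¹) * ((Units.val (g i k)).map d))
      + Matrix.trace ((Units.val (g i j)⁻¹) * ((Units.val (g i j)).map d)) = 0 := by
  have hik : g i k = g i j * g j k := (hcoc i j k).symm
  set A := Units.val (g i j)
  set B := Units.val (g j k)
  set A' := Units.val (g i j)⁻¹
  set B' := Units.val (g j k)⁻¹
  have hAB : A' * A = 1 := by simp [A, A']
  have hBB : B * B' = 1 := by simp [B, B']
  have h1 : Units.val (g i k)⁻¹ = B' * A' := by
    rw [hik, mul_inv_rev, Units.val_mul]
  have h2 : Units.val (g i k) = A * B := by rw [hik, Units.val_mul]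
  rw [h1, h2, map_d_mul d hd_add hd_mul,
    Matrix.mul_add, Matrix.trace_add]
  have t1 : Matrix.trace (B' * A' * (A.map d * B)) = Matrix.trace (A' * A.map d) := by
    rw [Matrix.trace_mul_comm, ← mul_assoc, mul_assoc (A.map d) B B', hBB, mul_one, Matrix.trace_mul_comm]
  have t2 : Matrix.trace (B' * A' * (A * B.map d)) = Matrix.trace (B' * B.map d) := by
    rw [mul_assoc, ← mul_assoc A', hAB, one_mul]
  rw [t1, t2]
  ring
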